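/- Any two q-cycles contained in a Sylow p-subgroup P of S_q, where q = p^a, are conjugate by an element of the normalizer of P in S_q. -/

import Mathlib

open Equiv Subgroup Pointwise
set_option maxHeartbeats 1000000

def stdc (n : ℕ) : Equiv.Perm (ZMod n) := Equiv.addRight 1
lemma stdc_apply {n : ℕ} (x : ZMod n) : stdc n x = x + 1 := rfl
lemma stdc_pow_apply {n : ℕ} (m : ℕ) (x : ZMod n) : ((stdc n) ^ m) x = x + m := by
  induction m generalizing x with
  | zero => simp
  | succ k ih => rw [pow_succ', Equiv.Perm.mul_apply, stdc_apply, ih]; push_cast; ring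

section
variable (p b : ℕ)

/-- natural projection -/
def cst : ZMod (p^(b+1)) →+* ZMod (p^b) := ZMod.castHom (pow_dvd_pow p (Nat.le_succ b)) _

/-- natural (set-theoretic) lift -/
def lft (r : ZMod (p^b)) : ZMod (p^(b+1)) := (r.val : ZMod (p^(b+1)))

/-- the central element: (p^b)-th power of the standard cycle -/
def zz : Equiv.Perm (ZMod (p^(b+1))) := (stdc (p^(b+1))) ^ (p^b : ℕ)

lemma cst_lft (hp : p.Prime) (r : ZMod (p^b)) : cst p b (lft p b r) = r := by
  haveI : NeZero (p^b) := ⟨pow_ne_zero _ hp.pos.ne'⟩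
  rw [lft, cst, map_natCast, ZMod.natCast_val, ZMod.cast_id]

lemma cst_natCast (m : ℕ) : cst p b ((m : ZMod (p^(b+1)))) = (m : ZMod (p^b)) := map_natCast _ m

lemma zz_pow_apply (k : ℕ) (x : ZMod (p^(b+1))) :
    ((zz p b) ^ k) x = x + ((p^b * k : ℕ) : ZMod (p^(b+1))) := by
  rw [zz, ← pow_mul, stdc_pow_apply]

lemma comm_zz_apply {σ : Equiv.Perm (ZMod (p^(b+1)))} (hσ : Commute σ (zz p b)) (k : ℕ)
    (x : ZMod (p^(b+1))) :
    σ (x + ((p^b * k : ℕ) : ZMod (p^(b+1)))) = σ x + ((p^b * k : ℕ) : ZMod (p^(b+1))) := by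
  have h1 : ∀ y, (zz p b ^ k) y = y + ((p^b * k : ℕ) : ZMod (p^(b+1))) := zz_pow_apply p b k
  have h2 : σ * (zz p b) ^ k = (zz p b) ^ k * σ := (hσ.pow_right k).eq
  have := congrArg (fun f : Equiv.Perm (ZMod (p^(b+1))) => f x) h2
  simp only [Equiv.Perm.mul_apply, h1] at this
  exact this

lemma cst_eq_iff (hp : p.Prime) (x y : ZMod (p^(b+1))) :
    cst p b x = cst p b y ↔ ∃ k : ℕ, y = x + ((p^b * k : ℕ) : ZMod (p^(b+1))) := by
  haveI : NeZero (p^(b+1)) := ⟨pow_ne_zero _ hp.pos.ne'⟩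
  constructor
  · intro hxy
    have hd : cst p b (y - x) = 0 := by rw [map_sub, hxy, sub_self]
    have hval : cst p b (y - x) = (((y - x).val : ℕ) : ZMod (p^b)) := by
      conv_lhs => rw [show y - x = (((y - x).val : ℕ) : ZMod (p^(b+1))) by
        rw [ZMod.natCast_val, ZMod.cast_id]]
      rw [cst_natCast]
    rw [hval, ZMod.natCast_eq_zero_iff] at hd
    refine ⟨(y - x).val / p^b, ?_⟩
    rw [Nat.mul_div_cancel' hd, ZMod.natCast_val, ZMod.cast_id]
    ring
  · rintro ⟨k, rfl⟩
    rw [map_add, cst_natCast]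
    have : ((p^b * k : ℕ) : ZMod (p^b)) = 0 := by
      rw [ZMod.natCast_eq_zero_iff]
      exact Dvd.intro k rfl
    rw [this, add_zero]

/-- descent: a permutation commuting with `zz` induces a well-defined map mod `p^b` -/
lemma descend (hp : p.Prime) {σ : Equiv.Perm (ZMod (p^(b+1)))} (hσ : Commute σ (zz p b))
    {x y : ZMod (p^(b+1))} (hxy : cst p b x = cst p b y) :
    cst p b (σ x) = cst p b (σ y) := by
  obtain ⟨k, rfl⟩ := (cst_eq_iff p b hp x y).mp hxy
  rw [comm_zz_apply p b hσ k x]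
  exact ((cst_eq_iff p b hp (σ x) _).mpr ⟨k, rfl⟩)

lemma cst_lft_cst (hp : p.Prime) (x : ZMod (p^(b+1))) :
    cst p b (lft p b (cst p b x)) = cst p b x :=
  cst_lft p b hp _

/-- the centralizer of zz -/
def CC : Subgroup (Equiv.Perm (ZMod (p^(b+1)))) := Subgroup.centralizer {zz p b}

lemma mem_CC_iff {σ : Equiv.Perm (ZMod (p^(b+1)))} : σ ∈ CC p b ↔ Commute σ (zz p b) := by
  rw [CC, Subgroup.mem_centralizer_iff]
  constructor
  · intro h; exact (h (zz p b) rfl).symm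
  · intro h g hg; rw [Set.mem_singleton_iff] at hg; rw [hg]; exact h.symm

/-- the underlying equiv of the induced permutation on `ZMod (p^b)` -/
def barEquiv (hp : p.Prime) (σ : ↥(CC p b)) : Equiv.Perm (ZMod (p^b)) where
  toFun r := cst p b ((σ : Equiv.Perm (ZMod (p^(b+1)))) (lft p b r))
  invFun r := cst p b (((σ : Equiv.Perm (ZMod (p^(b+1))))⁻¹) (lft p b r))
  left_inv r := by
    have hinv : Commute ((σ : Equiv.Perm (ZMod (p^(b+1))))⁻¹) (zz p b) :=
      (mem_CC_iff p b).mp (inv_mem σ.2)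
    show cst p b (_) = r
    rw [descend p b hp hinv (cst_lft_cst p b hp _)]
    simp only [Equiv.Perm.inv_def, Equiv.symm_apply_apply]
    exact cst_lft p b hp r
  right_inv r := by
    have hmem : Commute ((σ : Equiv.Perm (ZMod (p^(b+1))))) (zz p b) :=
      (mem_CC_iff p b).mp σ.2
    show cst p b (_) = r
    rw [descend p b hp hmem (cst_lft_cst p b hp _)]
    simp only [Equiv.Perm.inv_def, Equiv.apply_symm_apply]
    exact cst_lft p b hp r

lemma barEquiv_apply (hp : p.Prime) (σ : ↥(CC p b)) (r : ZMod (p^b)) :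
    barEquiv p b hp σ r = cst p b ((σ : Equiv.Perm (ZMod (p^(b+1)))) (lft p b r)) := rfl

lemma barEquiv_cst (hp : p.Prime) (σ : ↥(CC p b)) (x : ZMod (p^(b+1))) :
    barEquiv p b hp σ (cst p b x) = cst p b ((σ : Equiv.Perm (ZMod (p^(b+1)))) x) := by
  rw [barEquiv_apply]
  exact descend p b hp ((mem_CC_iff p b).mp σ.2) (cst_lft_cst p b hp x)

/-- the quotient homomorphism from the centralizer of `zz` -/
def φ (hp : p.Prime) : ↥(CC p b) →* Equiv.Perm (ZMod (p^b)) :=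
  MonoidHom.mk' (fun σ => barEquiv p b hp σ) (by
    intro σ τ
    ext r
    show cst p b (((σ : Equiv.Perm (ZMod (p^(b+1)))) * (τ : Equiv.Perm (ZMod (p^(b+1)))))
      (lft p b r)) = barEquiv p b hp σ (barEquiv p b hp τ r)
    rw [barEquiv_apply p b hp τ, barEquiv_cst p b hp σ, Equiv.Perm.mul_apply])

lemma φ_apply_cst (hp : p.Prime) (σ : ↥(CC p b)) (x : ZMod (p^(b+1))) :
    φ p b hp σ (cst p b x) = cst p b ((σ : Equiv.Perm (ZMod (p^(b+1)))) x) :=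
  barEquiv_cst p b hp σ x

lemma φ_apply (hp : p.Prime) (σ : ↥(CC p b)) (r : ZMod (p^b)) :
    φ p b hp σ r = cst p b ((σ : Equiv.Perm (ZMod (p^(b+1)))) (lft p b r)) := rfl

lemma stdc_mem_CC : stdc (p^(b+1)) ∈ CC p b :=
  (mem_CC_iff p b).mpr ((Commute.refl _).pow_right _)

lemma φ_stdc (hp : p.Prime) : φ p b hp ⟨stdc (p^(b+1)), stdc_mem_CC p b⟩ = stdc (p^b) := by
  ext r
  have h : (r : ZMod (p^b)) = cst p b (lft p b r) := (cst_lft p b hp r).symm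
  rw [stdc_apply, h, φ_apply_cst, stdc_apply, map_add, map_one]

end

section
variable (p b : ℕ)

/-- lift of a permutation mod `p^b` to one mod `p^(b+1)` -/
def mkLift (τ : Equiv.Perm (ZMod (p^b))) (x : ZMod (p^(b+1))) : ZMod (p^(b+1)) :=
  lft p b (τ (cst p b x)) + (x - lft p b (cst p b x))

lemma cst_mkLift (hp : p.Prime) (τ : Equiv.Perm (ZMod (p^b))) (x : ZMod (p^(b+1))) :
    cst p b (mkLift p b τ x) = τ (cst p b x) := by
  simp only [mkLift, map_add, map_sub, cst_lft p b hp]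
  ring

lemma mkLift_mkLift (hp : p.Prime) (τ₁ τ₂ : Equiv.Perm (ZMod (p^b))) (x : ZMod (p^(b+1))) :
    mkLift p b τ₂ (mkLift p b τ₁ x) = mkLift p b (τ₂ * τ₁) x := by
  conv_lhs => rw [show mkLift p b τ₂ (mkLift p b τ₁ x)
      = lft p b (τ₂ (cst p b (mkLift p b τ₁ x)))
        + (mkLift p b τ₁ x - lft p b (cst p b (mkLift p b τ₁ x))) from rfl,
    cst_mkLift p b hp τ₁ x]
  unfold mkLift
  simp only [Equiv.Perm.mul_apply]
  ring

lemma mkLift_one (x : ZMod (p^(b+1))) : mkLift p b 1 x = x := by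
  simp [mkLift]

end

section
variable (p b : ℕ)

lemma mkLift_add_ker (τ : Equiv.Perm (ZMod (p^b))) (x c : ZMod (p^(b+1)))
    (hc : cst p b c = 0) : mkLift p b τ (x + c) = mkLift p b τ x + c := by
  unfold mkLift
  rw [map_add, hc, add_zero]
  ring

/-- lift of a permutation mod `p^b` to one mod `p^(b+1)` -/
def liftPerm (hp : p.Prime) (τ : Equiv.Perm (ZMod (p^b))) : Equiv.Perm (ZMod (p^(b+1))) where
  toFun := mkLift p b τ
  invFun := mkLift p b τ⁻¹
  left_inv x := by rw [mkLift_mkLift p b hp, inv_mul_cancel, mkLift_one]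
  right_inv x := by rw [mkLift_mkLift p b hp, mul_inv_cancel, mkLift_one]

lemma zz_apply (x : ZMod (p^(b+1))) : zz p b x = x + ((p^b * 1 : ℕ) : ZMod (p^(b+1))) := by
  have := zz_pow_apply p b 1 x
  rwa [pow_one] at this

lemma cst_pb : cst p b ((p^b * 1 : ℕ) : ZMod (p^(b+1))) = 0 := by
  rw [cst_natCast, ZMod.natCast_eq_zero_iff]
  exact Dvd.intro 1 rfl

lemma liftPerm_mem_CC (hp : p.Prime) (τ : Equiv.Perm (ZMod (p^b))) :
    liftPerm p b hp τ ∈ CC p b := by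
  rw [mem_CC_iff]
  apply Equiv.ext
  intro x
  simp only [Equiv.Perm.mul_apply, zz_apply]
  show mkLift p b τ (x + _) = mkLift p b τ x + _
  exact mkLift_add_ker p b τ x _ (cst_pb p b)

lemma φ_surjective (hp : p.Prime) : Function.Surjective (φ p b hp) := by
  intro τ
  refine ⟨⟨liftPerm p b hp τ, liftPerm_mem_CC p b hp τ⟩, ?_⟩
  ext r
  rw [φ_apply]
  show cst p b (mkLift p b τ (lft p b r)) = τ r
  rw [cst_mkLift p b hp, cst_lft p b hp]

/-- the kernel subgroup: block-preserving elements of the centralizer -/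
def Kgrp : Subgroup (Equiv.Perm (ZMod (p^(b+1)))) where
  carrier := {σ | σ ∈ CC p b ∧ ∀ x, cst p b (σ x) = cst p b x}
  one_mem' := ⟨one_mem _, fun x => rfl⟩
  mul_mem' := by
    rintro σ τ ⟨hσ1, hσ2⟩ ⟨hτ1, hτ2⟩
    exact ⟨mul_mem hσ1 hτ1, fun x => by
      rw [Equiv.Perm.mul_apply, hσ2 (τ x), hτ2 x]⟩
  inv_mem' := by
    rintro σ ⟨hσ1, hσ2⟩
    refine ⟨inv_mem hσ1, fun x => ?_⟩
    have := hσ2 (σ⁻¹ x)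
    rw [Equiv.Perm.inv_def, Equiv.apply_symm_apply] at this
    exact this.symm

lemma mem_Kgrp_iff {σ : Equiv.Perm (ZMod (p^(b+1)))} :
    σ ∈ Kgrp p b ↔ σ ∈ CC p b ∧ ∀ x, cst p b (σ x) = cst p b x := Iff.rfl

lemma Kgrp_pow_eq_one (hp : p.Prime) {σ : Equiv.Perm (ZMod (p^(b+1)))}
    (hσ : σ ∈ Kgrp p b) : σ ^ p = 1 := by
  haveI : NeZero (p^(b+1)) := ⟨pow_ne_zero _ hp.pos.ne'⟩
  have hcomm : Commute σ (zz p b) := (mem_CC_iff p b).mp hσ.1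
  ext x
  obtain ⟨t, ht⟩ := (cst_eq_iff p b hp x (σ x)).mp (hσ.2 x).symm
  have claim : ∀ j : ℕ, (σ ^ j) x = x + ((p^b * (j * t) : ℕ) : ZMod (p^(b+1))) := by
    intro j
    induction j with
    | zero => simp
    | succ k ih =>
      rw [show σ ^ (k+1) = σ * σ ^ k from pow_succ' σ k, Equiv.Perm.mul_apply, ih,
        comm_zz_apply p b hcomm, ht]
      push_cast
      ring
  rw [claim p]
  have hz : ((p^b * (p * t) : ℕ) : ZMod (p^(b+1))) = 0 := by
    rw [ZMod.natCast_eq_zero_iff]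
    exact ⟨t, by ring⟩
  rw [hz, add_zero, Equiv.Perm.one_apply]

lemma Kgrp_isPGroup (hp : p.Prime) : IsPGroup p ↥(Kgrp p b) := by
  intro g
  refine ⟨1, ?_⟩
  have h := Kgrp_pow_eq_one p b hp g.2
  apply Subtype.ext
  rw [pow_one]
  rw [SubmonoidClass.coe_pow]
  exact h

lemma conj_mem_Kgrp (hp : p.Prime) {u k : Equiv.Perm (ZMod (p^(b+1)))}
    (hu : u ∈ CC p b) (hk : k ∈ Kgrp p b) : u * k * u⁻¹ ∈ Kgrp p b := by
  refine ⟨mul_mem (mul_mem hu hk.1) (inv_mem hu), fun x => ?_⟩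
  simp only [Equiv.Perm.mul_apply]
  have h1 : cst p b (k (u⁻¹ x)) = cst p b (u⁻¹ x) := hk.2 (u⁻¹ x)
  have h2 := descend p b hp ((mem_CC_iff p b).mp hu) h1
  rw [h2, Equiv.Perm.inv_def, Equiv.apply_symm_apply]

end

lemma stdc_pow_card {n : ℕ} : (stdc n) ^ n = 1 := by
  ext x; rw [stdc_pow_apply]; simp
lemma comm_stdc {n : ℕ} [NeZero n] (σ : Equiv.Perm (ZMod n))
    (hσ : σ * stdc n = stdc n * σ) : σ = (stdc n) ^ (σ 0).val := by
  have key : ∀ m : ℕ, σ (m : ZMod n) = (m : ZMod n) + σ 0 := by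
    intro m
    induction m with
    | zero => simp
    | succ k ih =>
      have := congrArg (fun f : Equiv.Perm (ZMod n) => f (k : ZMod n)) hσ
      simp only [Equiv.Perm.mul_apply, stdc_apply] at this
      push_cast
      rw [this, ih]; ring
  ext x
  obtain ⟨m, rfl⟩ := ZMod.natCast_zmod_surjective x
  rw [stdc_pow_apply, key m, ZMod.natCast_val, ZMod.cast_id]

lemma stdc_ne_one {p b : ℕ} (hp : p.Prime) : stdc (p^(b+1)) ≠ 1 := by
  haveI : NeZero (p^(b+1)) := ⟨pow_ne_zero _ hp.pos.ne'⟩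
  have hq2 : 2 ≤ p^(b+1) := hp.two_le.trans (Nat.le_self_pow (Nat.succ_ne_zero b) p)
  intro hh
  have := congrArg (fun f : Equiv.Perm (ZMod (p^(b+1))) => f 0) hh
  simp only [stdc_apply, zero_add, Equiv.Perm.one_apply] at this
  rw [show (1 : ZMod (p^(b+1))) = ((1:ℕ) : ZMod (p^(b+1))) by norm_num,
    ZMod.natCast_eq_zero_iff] at this
  have := Nat.le_of_dvd one_pos this
  omega

lemma sylow_le_centralizer {p b : ℕ} (hp : p.Prime)
    (Q : Sylow p (Equiv.Perm (ZMod (p^(b+1))))) (hc : stdc (p^(b+1)) ∈ Q) :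
    ∀ u ∈ Q, Commute u ((stdc (p^(b+1))) ^ (p^b : ℕ)) := by
  haveI : NeZero (p^(b+1)) := ⟨pow_ne_zero _ hp.pos.ne'⟩
  haveI : Fact p.Prime := ⟨hp⟩
  have hcne : stdc (p^(b+1)) ≠ 1 := stdc_ne_one hp
  haveI : Nontrivial ↥(Q : Subgroup (Equiv.Perm (ZMod (p^(b+1))))) :=
    ⟨⟨⟨stdc (p^(b+1)), hc⟩, 1, fun hh => hcne (Subtype.ext_iff.mp hh)⟩⟩
  haveI := Q.2.center_nontrivial
  obtain ⟨w, hw1⟩ := exists_ne (1 : Subgroup.center ↥(Q : Subgroup (Equiv.Perm (ZMod (p^(b+1))))))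
  have hwQ : ((w : ↥(Q : Subgroup (Equiv.Perm (ZMod (p^(b+1)))))) : Equiv.Perm (ZMod (p^(b+1)))) ∈ Q :=
    (w : ↥(Q : Subgroup (Equiv.Perm (ZMod (p^(b+1)))))).2
  set wP : Equiv.Perm (ZMod (p^(b+1))) :=
    ((w : ↥(Q : Subgroup (Equiv.Perm (ZMod (p^(b+1)))))) : Equiv.Perm (ZMod (p^(b+1)))) with hwP
  have hwne : wP ≠ 1 := fun hh => hw1 (Subtype.ext (Subtype.ext hh))
  have hwcomm : ∀ u ∈ Q, u * wP = wP * u := by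
    intro u hu
    exact congrArg Subtype.val (Subgroup.mem_center_iff.mp w.2 ⟨u, hu⟩)
  have hwpow : wP = (stdc (p^(b+1))) ^ (wP 0).val :=
    comm_stdc wP (hwcomm (stdc (p^(b+1))) hc).symm
  set m : ℕ := (wP 0).val with hm
  have hmlt : m < p^(b+1) := ZMod.val_lt _
  have hmne : m ≠ 0 := by
    intro h0; apply hwne; rw [hwpow, h0, pow_zero]
  obtain ⟨i, hi, hdeq⟩ := (Nat.dvd_prime_pow hp).mp (Nat.gcd_dvd_right m (p^(b+1)))
  have hib : i ≤ b := by
    by_contra hgt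
    have hieq : i = b + 1 := le_antisymm hi (by omega)
    have hnd : p^(b+1) ∣ m := by
      have := Nat.gcd_dvd_left m (p^(b+1))
      rwa [hdeq, hieq] at this
    have := Nat.le_of_dvd (Nat.pos_of_ne_zero hmne) hnd
    omega
  have hdpb : Nat.gcd m (p^(b+1)) ∣ p ^ b := hdeq ▸ pow_dvd_pow p hib
  have bez := Nat.gcd_eq_gcd_ab m (p^(b+1))
  have hcd : (stdc (p^(b+1))) ^ ((Nat.gcd m (p^(b+1))) : ℤ) = wP ^ (Nat.gcdA m (p^(b+1))) := by
    rw [bez, zpow_add, zpow_mul, zpow_mul, zpow_natCast, zpow_natCast, stdc_pow_card,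
      one_zpow, mul_one, ← hwpow]
  have hz : (stdc (p^(b+1))) ^ (p ^ b : ℕ) = wP ^ (Nat.gcdA m (p^(b+1)) * (p ^ b / Nat.gcd m (p^(b+1)))) := by
    have hsplit : (p ^ b : ℕ) = Nat.gcd m (p^(b+1)) * (p ^ b / Nat.gcd m (p^(b+1))) :=
      (Nat.mul_div_cancel' hdpb).symm
    calc (stdc (p^(b+1))) ^ (p ^ b : ℕ)
        = (stdc (p^(b+1))) ^ ((p ^ b : ℕ) : ℤ) := (zpow_natCast _ _).symm
      _ = (stdc (p^(b+1))) ^ (((Nat.gcd m (p^(b+1)) * (p ^ b / Nat.gcd m (p^(b+1))) : ℕ)) : ℤ) := by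
          rw [← hsplit]
      _ = ((stdc (p^(b+1))) ^ ((Nat.gcd m (p^(b+1))) : ℤ)) ^ ((p ^ b / Nat.gcd m (p^(b+1)) : ℕ) : ℤ) := by
          push_cast
          rw [zpow_mul]
      _ = wP ^ (Nat.gcdA m (p^(b+1)) * (p ^ b / Nat.gcd m (p^(b+1)))) := by
          rw [hcd, ← zpow_mul]
          norm_num
  intro u hu
  rw [hz]
  exact (show Commute u wP from hwcomm u hu).zpow_right _

section
variable (p b : ℕ)

lemma sylow_le_CC (hp : p.Prime) (Q : Sylow p (Equiv.Perm (ZMod (p^(b+1)))))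
    (hcQ : stdc (p^(b+1)) ∈ Q) : (Q : Subgroup _) ≤ CC p b := fun u hu =>
  (mem_CC_iff p b).mpr (sylow_le_centralizer hp Q hcQ u hu)

lemma Kgrp_le_sylow (hp : p.Prime) (Q : Sylow p (Equiv.Perm (ZMod (p^(b+1)))))
    (hcQ : stdc (p^(b+1)) ∈ Q) : Kgrp p b ≤ Q := by
  have hQle := sylow_le_CC p b hp Q hcQ
  have hnorm : (Q : Subgroup _) ≤ Subgroup.normalizer (Kgrp p b : Set (Equiv.Perm (ZMod (p^(b+1))))) := by
    intro u hu
    rw [Subgroup.mem_normalizer_iff]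
    intro k
    constructor
    · intro hk
      exact conj_mem_Kgrp p b hp (hQle hu) hk
    · intro hk
      have := conj_mem_Kgrp p b hp (inv_mem (hQle hu)) hk
      simpa [mul_assoc] using this
  have hsup : IsPGroup p ((Q : Subgroup _) ⊔ Kgrp p b : Subgroup _) :=
    IsPGroup.to_sup_of_normal_right' Q.2 (Kgrp_isPGroup p b hp) hnorm
  have heq := Q.3 hsup le_sup_left
  exact le_sup_right.trans heq.le

lemma ker_φ_mem_Kgrp (hp : p.Prime) {σ : ↥(CC p b)} (h : φ p b hp σ = 1) :
    (σ : Equiv.Perm (ZMod (p^(b+1)))) ∈ Kgrp p b := by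
  refine ⟨σ.2, fun x => ?_⟩
  have h2 := congrArg (fun f : Equiv.Perm (ZMod (p^b)) => f (cst p b x)) h
  simp only [Equiv.Perm.one_apply] at h2
  rw [φ_apply_cst] at h2
  exact h2

/-- the image Sylow subgroup in the quotient -/
def barSylow (hp : p.Prime) (Q : Sylow p (Equiv.Perm (ZMod (p^(b+1)))))
    (hcQ : stdc (p^(b+1)) ∈ Q) : Sylow p (Equiv.Perm (ZMod (p^b))) where
  toSubgroup := ((Q : Subgroup _).subgroupOf (CC p b)).map (φ p b hp)
  isPGroup' := (Q.2.comap_subtype).map _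
  is_maximal' := by
    intro T hT hle
    have hQle := sylow_le_CC p b hp Q hcQ
    have hT' : IsPGroup p (T.comap (φ p b hp)) := by
      intro g
      obtain ⟨k, hk⟩ := hT (⟨φ p b hp g.1, g.2⟩ : ↥T)
      refine ⟨k + 1, ?_⟩
      have hval : (φ p b hp g.1) ^ (p ^ k) = 1 := congrArg Subtype.val hk
      have hker : φ p b hp (g.1 ^ (p ^ k)) = 1 := by rw [map_pow, hval]
      have hKg : ((g.1 ^ (p ^ k) : ↥(CC p b)) : Equiv.Perm (ZMod (p^(b+1)))) ∈ Kgrp p b :=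
        ker_φ_mem_Kgrp p b hp hker
      have hp1 : ((g.1 ^ (p ^ k) : ↥(CC p b)) : Equiv.Perm (ZMod (p^(b+1)))) ^ p = 1 :=
        Kgrp_pow_eq_one p b hp hKg
      apply Subtype.ext
      apply Subtype.ext
      show ((g : ↥(CC p b)) : Equiv.Perm (ZMod (p^(b+1)))) ^ (p ^ (k+1)) = 1
      rw [show (p:ℕ)^(k+1) = p^k * p from pow_succ p k, pow_mul]
      calc (((g : ↥(CC p b)) : Equiv.Perm (ZMod (p^(b+1)))) ^ (p ^ k)) ^ p
          = ((g.1 ^ (p ^ k) : ↥(CC p b)) : Equiv.Perm (ZMod (p^(b+1)))) ^ p := by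
            norm_cast
        _ = 1 := hp1
    have hTp : IsPGroup p ((T.comap (φ p b hp)).map (CC p b).subtype) := hT'.map _
    have hQleTp : (Q : Subgroup _) ≤ (T.comap (φ p b hp)).map (CC p b).subtype := by
      intro u hu
      refine ⟨⟨u, hQle hu⟩, ?_, rfl⟩
      show φ p b hp ⟨u, hQle hu⟩ ∈ T
      exact hle ⟨⟨u, hQle hu⟩, (Subgroup.mem_subgroupOf).mpr hu, rfl⟩
    have hTpQ := Q.3 hTp hQleTp
    have hT'Q' : T.comap (φ p b hp) = (Q : Subgroup _).subgroupOf (CC p b) := by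
      apply Subgroup.map_injective (CC p b).subtype_injective
      rw [hTpQ, Subgroup.subgroupOf_map_subtype, inf_eq_left.mpr hQle]
    rw [← Subgroup.map_comap_eq_self_of_surjective (φ_surjective p b hp) T, hT'Q']

lemma barSylow_coe (hp : p.Prime) (Q : Sylow p (Equiv.Perm (ZMod (p^(b+1)))))
    (hcQ : stdc (p^(b+1)) ∈ Q) :
    (barSylow p b hp Q hcQ : Subgroup _) =
      ((Q : Subgroup _).subgroupOf (CC p b)).map (φ p b hp) := rfl

lemma stdc_mem_barSylow (hp : p.Prime) (Q : Sylow p (Equiv.Perm (ZMod (p^(b+1)))))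
    (hcQ : stdc (p^(b+1)) ∈ Q) : stdc (p^b) ∈ barSylow p b hp Q hcQ :=
  ⟨⟨stdc (p^(b+1)), stdc_mem_CC p b⟩, (Subgroup.mem_subgroupOf).mpr hcQ, φ_stdc p b hp⟩

lemma step (hp : p.Prime)
    (IH : ∀ Q R : Sylow p (Equiv.Perm (ZMod (p^b))),
      stdc (p^b) ∈ Q → stdc (p^b) ∈ R → Q = R)
    (Q R : Sylow p (Equiv.Perm (ZMod (p^(b+1)))))
    (hcQ : stdc (p^(b+1)) ∈ Q) (hcR : stdc (p^(b+1)) ∈ R) : Q = R := by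
  have hQle := sylow_le_CC p b hp Q hcQ
  have hRle := sylow_le_CC p b hp R hcR
  have hbar : barSylow p b hp Q hcQ = barSylow p b hp R hcR :=
    IH _ _ (stdc_mem_barSylow p b hp Q hcQ) (stdc_mem_barSylow p b hp R hcR)
  have hbar' : ((Q : Subgroup _).subgroupOf (CC p b)).map (φ p b hp) =
      ((R : Subgroup _).subgroupOf (CC p b)).map (φ p b hp) :=
    by rw [← barSylow_coe p b hp Q hcQ, ← barSylow_coe p b hp R hcR, hbar]
  have hkerQ : (φ p b hp).ker ≤ (Q : Subgroup _).subgroupOf (CC p b) := by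
    intro σ hσ
    rw [Subgroup.mem_subgroupOf]
    exact Kgrp_le_sylow p b hp Q hcQ (ker_φ_mem_Kgrp p b hp hσ)
  have hkerR : (φ p b hp).ker ≤ (R : Subgroup _).subgroupOf (CC p b) := by
    intro σ hσ
    rw [Subgroup.mem_subgroupOf]
    exact Kgrp_le_sylow p b hp R hcR (ker_φ_mem_Kgrp p b hp hσ)
  have hQR' : (Q : Subgroup _).subgroupOf (CC p b) = (R : Subgroup _).subgroupOf (CC p b) := by
    have hc := congrArg (Subgroup.comap (φ p b hp)) hbar'
    rwa [Subgroup.comap_map_eq, Subgroup.comap_map_eq, sup_eq_left.mpr hkerQ,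
      sup_eq_left.mpr hkerR] at hc
  apply Sylow.ext
  have hQeq : ((Q : Subgroup _).subgroupOf (CC p b)).map (CC p b).subtype = ↑Q := by
    rw [Subgroup.subgroupOf_map_subtype, inf_eq_left.mpr hQle]
  rw [← hQeq, hQR', Subgroup.subgroupOf_map_subtype, inf_eq_left.mpr hRle]

end

/-- uniqueness of the Sylow subgroup containing the standard cycle -/
lemma stdc_sylow_unique (p : ℕ) (hp : p.Prime) :
    ∀ (a : ℕ) (Q R : Sylow p (Equiv.Perm (ZMod (p^a)))),
      stdc (p^a) ∈ Q → stdc (p^a) ∈ R → Q = R := by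
  intro a
  induction a with
  | zero =>
    intro Q R _ _
    have hsub : ∀ σ : Equiv.Perm (ZMod (p^0)), σ = 1 := by
      intro σ; ext x
      haveI : Subsingleton (ZMod (p^0)) := by rw [pow_zero]; infer_instance
      exact Subsingleton.elim _ _
    apply Sylow.ext
    ext σ
    rw [hsub σ]
    simp [one_mem]
    exact iff_of_true (Q : Subgroup (Equiv.Perm (ZMod (p^0)))).one_mem (R : Subgroup (Equiv.Perm (ZMod (p^0)))).one_mem
  | succ b ih => exact fun Q R hQ hR => step p b hp ih Q R hQ hR

section FullCycle

lemma fullCycle_isCycle {α : Type*} [Fintype α] [DecidableEq α] (h : Equiv.Perm α)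
    (hfull : ∀ x y, h.SameCycle x y) (hcard : 2 ≤ Fintype.card α) :
    h.IsCycle ∧ h.support = Finset.univ := by
  have hnf : ∀ x, h x ≠ x := by
    intro x hx
    obtain ⟨y, hy⟩ := Fintype.exists_ne_of_one_lt_card hcard x
    obtain ⟨n, hn⟩ := hfull x y
    rw [Equiv.Perm.zpow_apply_eq_self_of_apply_eq_self hx n] at hn
    exact hy hn.symm
  haveI : Nonempty α := Fintype.card_pos_iff.mp (by omega)
  obtain ⟨x⟩ := ‹Nonempty α›
  refine ⟨⟨x, hnf x, fun y _ => hfull x y⟩, ?_⟩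
  ext u
  simp [Equiv.Perm.mem_support, hnf u]

lemma stdc_fullCycle (n : ℕ) [NeZero n] : ∀ x y : ZMod n, (stdc n).SameCycle x y := by
  intro x y
  refine ⟨((y - x).val : ℤ), ?_⟩
  rw [zpow_natCast, stdc_pow_apply, ZMod.natCast_val, ZMod.cast_id]
  ring

lemma cycle_sylow_unique_zmod (p a : ℕ) (hp : p.Prime) (ha : 0 < a)
    (h : Equiv.Perm (ZMod (p^a))) (hfull : ∀ x y, h.SameCycle x y)
    (Q R : Sylow p (Equiv.Perm (ZMod (p^a)))) (hQ : h ∈ Q) (hR : h ∈ R) : Q = R := by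
  haveI : NeZero (p^a) := ⟨pow_ne_zero _ hp.pos.ne'⟩
  have hcard2 : 2 ≤ Fintype.card (ZMod (p^a)) := by
    rw [ZMod.card]
    exact hp.two_le.trans (Nat.le_self_pow ha.ne' p)
  obtain ⟨hcyc, hsup⟩ := fullCycle_isCycle h hfull hcard2
  obtain ⟨scyc, ssup⟩ := fullCycle_isCycle (stdc (p^a)) (stdc_fullCycle _) hcard2
  have hconj : IsConj (stdc (p^a)) h := scyc.isConj hcyc (by rw [hsup, ssup])
  obtain ⟨x, hx⟩ := isConj_iff.mp hconj
  have hmem : ∀ (S : Sylow p (Equiv.Perm (ZMod (p^a)))), h ∈ S →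
      stdc (p^a) ∈ (x⁻¹ • S : Sylow p (Equiv.Perm (ZMod (p^a)))) := by
    intro S hS
    show stdc (p^a) ∈ (MulAut.conj x⁻¹ • (S : Subgroup _))
    rw [Subgroup.mem_pointwise_smul_iff_inv_smul_mem]
    have hinv : (MulAut.conj x⁻¹)⁻¹ = MulAut.conj x := by
      rw [← map_inv, inv_inv]
    rw [hinv]
    show x * stdc (p^a) * x⁻¹ ∈ S
    rw [hx]
    exact hS
  have := stdc_sylow_unique p hp a (x⁻¹ • Q) (x⁻¹ • R) (hmem Q hQ) (hmem R hR)
  exact smul_left_cancel x⁻¹ this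

/-- transport of permutation groups along an equiv, as a `MulEquiv` -/
def permMulEquiv {α β : Type*} (e : α ≃ β) : Equiv.Perm α ≃* Equiv.Perm β :=
  { e.permCongr with
    map_mul' := fun f g => Equiv.ext fun x => by
      simp [Equiv.permCongr_apply, Equiv.Perm.mul_apply] }

lemma permMulEquiv_apply {α β : Type*} (e : α ≃ β) (f : Equiv.Perm α) (x : β) :
    permMulEquiv e f x = e (f (e.symm x)) := rfl

/-- transport of Sylow subgroups along a `MulEquiv` -/
def sylowMap {G H : Type*} [Group G] [Group H] (p : ℕ) (F : G ≃* H) (Q : Sylow p G) :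
    Sylow p H where
  toSubgroup := (Q : Subgroup G).map F.toMonoidHom
  isPGroup' := Q.2.map _
  is_maximal' := by
    intro T hT hle
    have h1 : (Q : Subgroup G) ≤ T.comap F.toMonoidHom := fun u hu =>
      hle (Subgroup.mem_map_of_mem _ hu)
    have h2 : IsPGroup p (T.comap F.toMonoidHom) :=
      hT.comap_of_injective F.toMonoidHom F.injective
    have h3 := Q.3 h2 h1
    rw [← Subgroup.map_comap_eq_self_of_surjective (show Function.Surjective F.toMonoidHom from F.surjective) T, h3]

lemma mem_sylowMap {G H : Type*} [Group G] [Group H] (p : ℕ) (F : G ≃* H) (Q : Sylow p G)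
    (m : H) : m ∈ sylowMap p F Q ↔ F.symm m ∈ Q := Subgroup.mem_map_equiv

lemma cycle_sylow_unique_fin (p a : ℕ) (hp : p.Prime) (ha : 0 < a)
    (h : Equiv.Perm (Fin (p^a))) (hfull : ∀ x y, h.SameCycle x y)
    (Q R : Sylow p (Equiv.Perm (Fin (p^a)))) (hQ : h ∈ Q) (hR : h ∈ R) : Q = R := by
  haveI : NeZero (p^a) := ⟨pow_ne_zero _ hp.pos.ne'⟩
  have e : Fin (p^a) ≃ ZMod (p^a) := Fintype.equivOfCardEq (by simp [ZMod.card])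
  set F := permMulEquiv e with hF
  have hFfull : ∀ x y, (F h).SameCycle x y := by
    intro x y
    obtain ⟨n, hn⟩ := hfull (e.symm x) (e.symm y)
    refine ⟨n, ?_⟩
    rw [← map_zpow, hF, permMulEquiv_apply, hn, Equiv.apply_symm_apply]
  have hkey := cycle_sylow_unique_zmod p a hp ha (F h) hFfull (sylowMap p F Q) (sylowMap p F R)
    ((mem_sylowMap p F Q (F h)).mpr (by rw [MulEquiv.symm_apply_apply]; exact hQ))
    ((mem_sylowMap p F R (F h)).mpr (by rw [MulEquiv.symm_apply_apply]; exact hR))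
  apply Sylow.ext
  have hcoe := congrArg Sylow.toSubgroup hkey
  exact Subgroup.map_injective F.injective hcoe

end FullCycle

theorem q_cycles_conjugate_in_normalizer (p a : ℕ) (hp : p.Prime) (ha : 0 < a)
    (q : ℕ) (hq : q = p ^ a) (P : Sylow p (Equiv.Perm (Fin q)))
    (g h : Equiv.Perm (Fin q)) (hgP : g ∈ P) (hhP : h ∈ P)
    (hg : ∀ x y : Fin q, g.SameCycle x y) (hh : ∀ x y : Fin q, h.SameCycle x y) :
    ∃ k ∈ Subgroup.normalizer (P : Subgroup (Equiv.Perm (Fin q))),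
      k⁻¹ * g * k = h := by
  subst hq
  have hcard2 : 2 ≤ Fintype.card (Fin (p^a)) := by
    rw [Fintype.card_fin]
    exact hp.two_le.trans (Nat.le_self_pow ha.ne' p)
  obtain ⟨gcyc, gsup⟩ := fullCycle_isCycle g hg hcard2
  obtain ⟨hcyc, hsup⟩ := fullCycle_isCycle h hh hcard2
  have hconj : IsConj g h := gcyc.isConj hcyc (by rw [gsup, hsup])
  obtain ⟨x, hx⟩ := isConj_iff.mp hconj
  have hmem : h ∈ (x • P : Sylow p (Equiv.Perm (Fin (p^a)))) := by
    show h ∈ (MulAut.conj x • (P : Subgroup _))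
    rw [Subgroup.mem_pointwise_smul_iff_inv_smul_mem]
    have hinv : (MulAut.conj x)⁻¹ = MulAut.conj x⁻¹ := by rw [← map_inv]
    rw [hinv]
    show x⁻¹ * h * x⁻¹⁻¹ ∈ P
    rw [inv_inv, ← hx]
    simpa [mul_assoc] using hgP
  have hPeq : (x • P : Sylow p (Equiv.Perm (Fin (p^a)))) = P :=
    cycle_sylow_unique_fin p a hp ha h hh (x • P) P hmem hhP
  have hxn : x ∈ Subgroup.normalizer (P : Subgroup (Equiv.Perm (Fin (p^a)))) :=
    Sylow.smul_eq_iff_mem_normalizer.mp hPeq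
  refine ⟨x⁻¹, inv_mem hxn, ?_⟩
  rw [inv_inv, ← hx]

-- axiom check
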